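/- Let D be a positive squarefree integer. For every positive divisor d of D², both d·gcd(d, D²/d) and (D²/d)·gcd(d, D²/d) are perfect squares, and the map sending d to the pair (M, L) = (√(d·gcd(d, D²/d)), √((D²/d)·gcd(d, D²/d))) is a bijection from the set of positive divisors of D² onto the set of pairs (M, L) of positive divisors of D with D ∣ M·L. Moreover, under this map gcd(d, D²/d) = gcd(M, L) and d = (M/gcd(M, L))²·gcd(M, L). -/
import Mathlib

private lemma fmin {a b : ℕ} (ha : a ≠ 0) (hb : b ≠ 0) (p : ℕ) :
    (Nat.gcd a b).factorization p = min (a.factorization p) (b.factorization p) := by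
  rw [Nat.factorization_gcd ha hb, Finsupp.inf_apply]

/-- Core structural facts for a divisor `d` of `D²` with `D` squarefree. -/
private lemma key (D d : ℕ) (hD : 0 < D) (hsq : Squarefree D) (hd : d ∣ D ^ 2) :
    d * Nat.gcd d (D ^ 2 / d) = (Nat.gcd d D) ^ 2 ∧
    (D ^ 2 / d) * Nat.gcd d (D ^ 2 / d) = (Nat.gcd (D ^ 2 / d) D) ^ 2 ∧
    Nat.gcd d D * Nat.gcd (D ^ 2 / d) D = Nat.gcd d (D ^ 2 / d) * D ∧
    Nat.gcd d (D ^ 2 / d) = Nat.gcd (Nat.gcd d D) (Nat.gcd (D ^ 2 / d) D) := by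
  have hD2 : D ^ 2 ≠ 0 := pow_ne_zero 2 hD.ne'
  have hd0 : d ≠ 0 := by rintro rfl; exact hD2 (zero_dvd_iff.mp hd)
  set e := D ^ 2 / d with he
  have hde : d * e = D ^ 2 := Nat.mul_div_cancel' hd
  have he0 : e ≠ 0 := by rintro h; rw [h, mul_zero] at hde; exact hD2 hde.symm
  have hg0 : Nat.gcd d e ≠ 0 := Nat.gcd_ne_zero_left hd0
  have hM0 : Nat.gcd d D ≠ 0 := Nat.gcd_ne_zero_left hd0
  have hL0 : Nat.gcd e D ≠ 0 := Nat.gcd_ne_zero_left he0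
  have hA : ∀ p, D.factorization p ≤ 1 := fun p => hsq.natFactorization_le_one p
  have hsum : ∀ p, d.factorization p + e.factorization p = 2 * D.factorization p := by
    intro p
    have h1 : d.factorization + e.factorization = (D ^ 2).factorization := by
      rw [← Nat.factorization_mul hd0 he0, hde]
    have h2 := congrArg (fun f => f p) h1
    simpa [Nat.factorization_pow, two_mul] using h2
  refine ⟨?_, ?_, ?_, ?_⟩
  · refine Nat.eq_of_factorization_eq (by positivity) (by positivity) fun p => ?_
    rw [Nat.factorization_mul hd0 hg0, Nat.factorization_pow]
    simp only [Finsupp.add_apply, Finsupp.smul_apply, smul_eq_mul, fmin hd0 he0, fmin hd0 hD.ne']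
    have := hA p; have := hsum p; omega
  · refine Nat.eq_of_factorization_eq (by positivity) (by positivity) fun p => ?_
    rw [Nat.factorization_mul he0 hg0, Nat.factorization_pow]
    simp only [Finsupp.add_apply, Finsupp.smul_apply, smul_eq_mul, fmin hd0 he0, fmin he0 hD.ne']
    have := hA p; have := hsum p; omega
  · refine Nat.eq_of_factorization_eq (by positivity) (by positivity) fun p => ?_
    rw [Nat.factorization_mul hM0 hL0, Nat.factorization_mul hg0 hD.ne']
    simp only [Finsupp.add_apply, fmin hd0 he0, fmin hd0 hD.ne', fmin he0 hD.ne']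
    have := hA p; have := hsum p; omega
  · refine Nat.eq_of_factorization_eq hg0 (Nat.gcd_ne_zero_left hM0) fun p => ?_
    simp only [fmin hd0 he0, fmin hd0 hD.ne', fmin he0 hD.ne', fmin hM0 hL0]
    have := hA p; have := hsum p; omega

/-- For `M, L` divisors of squarefree `D` with `D ∣ M·L`, one has `M·L = gcd(M,L)·D`. -/
private lemma key2 (D M L : ℕ) (hD : 0 < D) (hsq : Squarefree D)
    (hM : M ∣ D) (hL : L ∣ D) (hdvd : D ∣ M * L) :
    M * L = Nat.gcd M L * D := by
  have hM0 : M ≠ 0 := by rintro rfl; exact hD.ne' (zero_dvd_iff.mp hM)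
  have hL0 : L ≠ 0 := by rintro rfl; exact hD.ne' (zero_dvd_iff.mp hL)
  refine Nat.eq_of_factorization_eq (mul_ne_zero hM0 hL0)
    (mul_ne_zero (Nat.gcd_ne_zero_left hM0) hD.ne') fun p => ?_
  rw [Nat.factorization_mul hM0 hL0, Nat.factorization_mul (Nat.gcd_ne_zero_left hM0) hD.ne']
  simp only [Finsupp.add_apply, fmin hM0 hL0]
  have hA := hsq.natFactorization_le_one p
  have h1 : M.factorization p ≤ D.factorization p :=
    (Nat.factorization_le_iff_dvd hM0 hD.ne').mpr hM p
  have h2 : L.factorization p ≤ D.factorization p :=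
    (Nat.factorization_le_iff_dvd hL0 hD.ne').mpr hL p
  have h3 : D.factorization p ≤ M.factorization p + L.factorization p := by
    have := (Nat.factorization_le_iff_dvd hD.ne' (by positivity)).mpr hdvd p
    rwa [Nat.factorization_mul hM0 hL0, Finsupp.add_apply] at this
  omega

/-- For `D` a positive squarefree integer, for every positive divisor `d` of
`D²`, both `d·gcd(d, D²/d)` and `(D²/d)·gcd(d, D²/d)` are perfect squares, the map
`d ↦ (√(d·gcd(d, D²/d)), √((D²/d)·gcd(d, D²/d)))` is a bijection from the divisors of `D²`
onto the pairs `(M, L)` of divisors of `D` with `D ∣ M·L`, and under this map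
`gcd(d, D²/d) = gcd(M, L)` and `d = (M/gcd(M, L))²·gcd(M, L)`. -/
theorem stmt_1 (D : ℕ) (hD : 0 < D) (hsq : Squarefree D) :
    (∀ d ∈ (D ^ 2).divisors,
        IsSquare (d * Nat.gcd d (D ^ 2 / d)) ∧ IsSquare ((D ^ 2 / d) * Nat.gcd d (D ^ 2 / d))) ∧
    Set.BijOn
      (fun d => (Nat.sqrt (d * Nat.gcd d (D ^ 2 / d)),
                 Nat.sqrt ((D ^ 2 / d) * Nat.gcd d (D ^ 2 / d))))
      ((D ^ 2).divisors : Set ℕ)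
      (((D.divisors ×ˢ D.divisors).filter (fun q => D ∣ q.1 * q.2) : Finset (ℕ × ℕ)) :
        Set (ℕ × ℕ)) ∧
    (∀ d ∈ (D ^ 2).divisors,
        Nat.gcd d (D ^ 2 / d) =
          Nat.gcd (Nat.sqrt (d * Nat.gcd d (D ^ 2 / d)))
            (Nat.sqrt ((D ^ 2 / d) * Nat.gcd d (D ^ 2 / d))) ∧
        d = (Nat.sqrt (d * Nat.gcd d (D ^ 2 / d)) /
              Nat.gcd (Nat.sqrt (d * Nat.gcd d (D ^ 2 / d)))
                (Nat.sqrt ((D ^ 2 / d) * Nat.gcd d (D ^ 2 / d)))) ^ 2 *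
            Nat.gcd (Nat.sqrt (d * Nat.gcd d (D ^ 2 / d)))
              (Nat.sqrt ((D ^ 2 / d) * Nat.gcd d (D ^ 2 / d)))) := by
  have hD2 : (0:ℕ) < D ^ 2 := by positivity
  -- sqrt computations for a divisor d
  have hsqrt : ∀ d ∈ (D ^ 2).divisors,
      Nat.sqrt (d * Nat.gcd d (D ^ 2 / d)) = Nat.gcd d D ∧
      Nat.sqrt ((D ^ 2 / d) * Nat.gcd d (D ^ 2 / d)) = Nat.gcd (D ^ 2 / d) D := by
    intro d hdm
    obtain ⟨h1, h2, _, _⟩ := key D d hD hsq (Nat.mem_divisors.mp hdm).1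
    rw [h1, h2, Nat.sqrt_eq', Nat.sqrt_eq']
    exact ⟨rfl, rfl⟩
  refine ⟨?_, ⟨?_, ?_, ?_⟩, ?_⟩
  · intro d hdm
    obtain ⟨h1, h2, _, _⟩ := key D d hD hsq (Nat.mem_divisors.mp hdm).1
    exact ⟨⟨Nat.gcd d D, by rw [h1, sq]⟩, ⟨Nat.gcd (D ^ 2 / d) D, by rw [h2, sq]⟩⟩
  · -- maps to
    intro d hdm
    simp only [Finset.coe_filter, Set.mem_setOf_eq] at hdm ⊢
    have hdm' : d ∈ (D ^ 2).divisors := hdm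
    obtain ⟨hs1, hs2⟩ := hsqrt d hdm'
    obtain ⟨_, _, h3, _⟩ := key D d hD hsq (Nat.mem_divisors.mp hdm').1
    rw [hs1, hs2]
    refine ⟨Finset.mem_product.mpr ⟨?_, ?_⟩, ?_⟩
    · exact Nat.mem_divisors.mpr ⟨Nat.gcd_dvd_right _ _, hD.ne'⟩
    · exact Nat.mem_divisors.mpr ⟨Nat.gcd_dvd_right _ _, hD.ne'⟩
    · exact ⟨Nat.gcd d (D ^ 2 / d), by rw [h3, mul_comm]⟩
  · -- injective
    intro d1 hd1 d2 hd2 heq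
    have hd1' : d1 ∈ (D ^ 2).divisors := hd1
    have hd2' : d2 ∈ (D ^ 2).divisors := hd2
    obtain ⟨ha1, ha2⟩ := hsqrt d1 hd1'
    obtain ⟨hb1, hb2⟩ := hsqrt d2 hd2'
    simp only [Prod.mk.injEq, ha1, ha2, hb1, hb2] at heq
    obtain ⟨hM, hL⟩ := heq
    obtain ⟨e1, _, _, g1⟩ := key D d1 hD hsq (Nat.mem_divisors.mp hd1').1
    obtain ⟨e2, _, _, g2⟩ := key D d2 hD hsq (Nat.mem_divisors.mp hd2').1
    have hgeq : Nat.gcd d1 (D ^ 2 / d1) = Nat.gcd d2 (D ^ 2 / d2) := by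
      rw [g1, g2, hM, hL]
    have hg0 : 0 < Nat.gcd d1 (D ^ 2 / d1) := Nat.gcd_pos_of_pos_left _
      (Nat.pos_of_mem_divisors hd1')
    have h := e1
    rw [hM, ← e2, ← hgeq] at h
    exact Nat.eq_of_mul_eq_mul_right hg0 h
  · -- surjective
    intro q hq
    simp only [Finset.coe_filter, Set.mem_setOf_eq] at hq
    obtain ⟨hmem, hdvd⟩ := hq
    obtain ⟨hMmem, hLmem⟩ := Finset.mem_product.mp hmem
    obtain ⟨M, L⟩ := q
    simp only at hdvd hMmem hLmem ⊢
    have hMdvd : M ∣ D := (Nat.mem_divisors.mp hMmem).1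
    have hLdvd : L ∣ D := (Nat.mem_divisors.mp hLmem).1
    have hM0 : 0 < M := Nat.pos_of_mem_divisors hMmem
    have hL0 : 0 < L := Nat.pos_of_mem_divisors hLmem
    set g := Nat.gcd M L with hgdef
    have hg0 : 0 < g := Nat.gcd_pos_of_pos_left _ hM0
    set m := M / g with hmdef
    set l := L / g with hldef
    have hmg : m * g = M := Nat.div_mul_cancel (Nat.gcd_dvd_left M L)
    have hlg : l * g = L := Nat.div_mul_cancel (Nat.gcd_dvd_right M L)
    have hml : Nat.Coprime m l := Nat.coprime_div_gcd_div_gcd hg0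
    have hMLgD : M * L = g * D := key2 D M L hD hsq hMdvd hLdvd hdvd
    have hmlgD : m * l * g = D := by
      have h : (m * l * g) * g = D * g := by
        calc (m * l * g) * g = (m * g) * (l * g) := by ring
          _ = M * L := by rw [hmg, hlg]
          _ = g * D := hMLgD
          _ = D * g := mul_comm _ _
      exact Nat.eq_of_mul_eq_mul_right hg0 h
    set d := m ^ 2 * g with hddef
    have hm0 : 0 < m := by
      rcases Nat.eq_zero_or_pos m with h | h
      · rw [h, zero_mul] at hmg; omega
      · exact h
    have hd0 : 0 < d := by positivity
    have hde : d * (l ^ 2 * g) = D ^ 2 := by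
      have h1 : d * (l ^ 2 * g) = (m * l * g) ^ 2 := by rw [hddef]; ring
      rw [h1, hmlgD]
    have hdiv : D ^ 2 / d = l ^ 2 * g :=
      Nat.div_eq_of_eq_mul_left hd0 (by rw [← hde]; ring)
    have hgcd : Nat.gcd d (D ^ 2 / d) = g := by
      rw [hdiv, hddef, Nat.gcd_mul_right, (Nat.Coprime.pow 2 2 hml : Nat.gcd (m ^ 2) (l ^ 2) = 1), one_mul]
    refine ⟨d, ?_, ?_⟩
    · exact Nat.mem_divisors.mpr ⟨⟨l ^ 2 * g, hde.symm⟩, hD2.ne'⟩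
    · have e1 : d * g = M ^ 2 := by rw [hddef, ← hmg]; ring
      have e2 : (D ^ 2 / d) * g = L ^ 2 := by rw [hdiv, ← hlg]; ring
      simp only [hgcd, e1, e2, Nat.sqrt_eq']
  · -- last bullet
    intro d hdm
    have hddvd := (Nat.mem_divisors.mp hdm).1
    obtain ⟨hs1, hs2⟩ := hsqrt d hdm
    obtain ⟨e1, _, _, g4⟩ := key D d hD hsq hddvd
    rw [hs1, hs2, ← g4]
    refine ⟨rfl, ?_⟩
    set g := Nat.gcd d (D ^ 2 / d) with hg
    have hg0 : 0 < g := Nat.gcd_pos_of_pos_left _ (Nat.pos_of_mem_divisors hdm)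
    have hgM : g ∣ Nat.gcd d D := by rw [g4]; exact Nat.gcd_dvd_left _ _
    obtain ⟨m, hm⟩ := hgM
    have hMg : Nat.gcd d D / g = m := by rw [hm, Nat.mul_div_cancel_left _ hg0]
    rw [hMg]
    exact Nat.eq_of_mul_eq_mul_right hg0 (by rw [e1, hm]; ring)
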